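/- For λ < λ_s, the function f_λ(t) = λ²t^k + log(1-t) + t is strictly decreasing on [0,1). -/

import Mathlib

lemma amgm (m : ℕ) (u : ℝ) (hu : 0 ≤ u) : ((m:ℝ)+1) * u^m ≤ (m:ℝ) * u^(m+1) + 1 := by
  induction m with
  | zero => simp
  | succ n ih =>
    have h3 : ((n:ℝ)+1) * u^n * u ≤ ((n:ℝ) * u^(n+1) + 1) * u :=
      mul_le_mul_of_nonneg_right ih hu
    have h2 : 0 ≤ (u^(n+1) - 1) * (u - 1) := by
      rcases le_total u 1 with h | h
      · have h1 : u^(n+1) ≤ 1 := pow_le_one₀ hu h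
        nlinarith
      · have h1 : 1 ≤ u^(n+1) := one_le_pow₀ h
        nlinarith
    have e1 : u^(n+1) = u^n * u := by ring
    have e2 : u^(n+2) = u^(n+1) * u := by ring
    push_cast
    nlinarith [h3, h2]

lemma keybound (m : ℕ) (x : ℝ) (hx : 0 ≤ x) :
    x^(m+1) * (1-x) ≤ ((m:ℝ)+1)^(m+1) / ((m:ℝ)+2)^(m+2) := by
  set u : ℝ := ((m:ℝ)+2) * x / ((m:ℝ)+1) with hu_def
  have hm1 : (0:ℝ) < (m:ℝ)+1 := by positivity
  have hm2 : (0:ℝ) < (m:ℝ)+2 := by positivity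
  have hu : 0 ≤ u := by positivity
  have h := amgm (m+1) u hu
  push_cast at h
  have h1 : u^(m+1) * (((m:ℝ)+2) * (1-x)) ≤ 1 := by
    have e : u^(m+2) = u^(m+1) * u := by ring
    have : u^(m+1) * (((m:ℝ)+2) - ((m:ℝ)+1) * u) ≤ 1 := by nlinarith [h]
    have eu : ((m:ℝ)+1) * u = ((m:ℝ)+2) * x := by
      rw [hu_def]; field_simp
    calc u^(m+1) * (((m:ℝ)+2) * (1-x)) = u^(m+1) * (((m:ℝ)+2) - ((m:ℝ)+1) * u) := by
          rw [eu]; ring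
      _ ≤ 1 := this
  have e2 : x^(m+1) * (1-x)
      = (u^(m+1) * (((m:ℝ)+2) * (1-x))) * (((m:ℝ)+1)^(m+1) / ((m:ℝ)+2)^(m+2)) := by
    rw [hu_def, div_pow, mul_pow]
    field_simp
    ring
  rw [e2]
  have hB : (0:ℝ) ≤ ((m:ℝ)+1)^(m+1) / ((m:ℝ)+2)^(m+2) := by positivity
  nlinarith [mul_le_mul_of_nonneg_right h1 hB]

theorem stmt_4 (k : ℕ) (hk : 3 ≤ k) (lam : ℝ) (hlam : 0 < lam)
    (hlt : lam < Real.sqrt (((k : ℝ) - 1) ^ (k - 1) / ((k : ℝ) * ((k : ℝ) - 2) ^ (k - 2)))) :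
    StrictAntiOn (fun t : ℝ => lam ^ 2 * t ^ k + Real.log (1 - t) + t)
      (Set.Ico (0 : ℝ) 1) := by
  obtain ⟨m, rfl⟩ : ∃ m, k = m + 3 := ⟨k - 3, by omega⟩
  clear hk
  -- rewrite hlt to λ² < A
  have hA : lam ^ 2 < ((m:ℝ)+2)^(m+2) / (((m:ℝ)+3) * ((m:ℝ)+1)^(m+1)) := by
    have e1 : ((m+3:ℕ):ℝ) - 1 = (m:ℝ)+2 := by push_cast; ring
    have e2 : ((m+3:ℕ):ℝ) - 2 = (m:ℝ)+1 := by push_cast; ring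
    have e3 : ((m+3:ℕ):ℝ) = (m:ℝ)+3 := by push_cast; ring
    have := (Real.lt_sqrt hlam.le).mp hlt
    rw [show m+3-1 = m+2 from rfl, show m+3-2 = m+1 from rfl, e1, e2, e3] at this
    exact this
  have hcont : ContinuousOn (fun t : ℝ => lam ^ 2 * t ^ (m+3) + Real.log (1 - t) + t)
      (Set.Ico (0:ℝ) 1) := by
    apply ContinuousOn.add
    apply ContinuousOn.add
    · exact (continuous_const.mul (continuous_pow _)).continuousOn
    · apply ContinuousOn.log
      · exact (continuous_const.sub continuous_id).continuousOn
      · intro x hx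
        simp only [Set.mem_Ico] at hx
        have : (0:ℝ) < 1 - x := by linarith [hx.2]
        linarith
    · exact continuous_id.continuousOn
  apply strictAntiOn_of_deriv_neg (convex_Ico 0 1) hcont
  rw [interior_Ico]
  intro x hx
  obtain ⟨hx0, hx1⟩ := hx
  have h1x : (0:ℝ) < 1 - x := by linarith
  have h1x' : (1:ℝ) - x ≠ 0 := ne_of_gt h1x
  -- compute the derivative
  have hd : HasDerivAt (fun t : ℝ => lam ^ 2 * t ^ (m+3) + Real.log (1 - t) + t)
      (lam ^ 2 * ((m+3) * x ^ (m+2)) + (-1) / (1 - x) + 1) x := by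
    have hlog : HasDerivAt (fun t : ℝ => Real.log (1 - t)) ((-1) / (1 - x)) x := by
      have hin : HasDerivAt (fun t : ℝ => 1 - t) (-1) x := by
        simpa using ((hasDerivAt_id x).const_sub (1:ℝ))
      have := (Real.hasDerivAt_log h1x').comp x hin
      exact this.congr_deriv (by ring)
    have hpow : HasDerivAt (fun t : ℝ => lam ^ 2 * t ^ (m+3))
        (lam ^ 2 * ((m+3) * x ^ (m+2))) x := by
      have := (hasDerivAt_pow (m+3) x).const_mul (lam ^ 2)
      exact this.congr_deriv (by rw [show m+3-1 = m+2 from rfl]; push_cast; ring)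
    exact (hpow.add hlog).add (hasDerivAt_id x)
  rw [hd.deriv]
  -- show λ² (m+3) x^(m+2) - x/(1-x) < 0
  have key : lam ^ 2 * (((m:ℝ)+3) * x ^ (m+2)) < x / (1 - x) := by
    have hb := keybound m x hx0.le
    have hpos : (0:ℝ) < ((m:ℝ)+3) * x ^ (m+1) * (1 - x) := by positivity
    have step1 : lam ^ 2 * (((m:ℝ)+3) * x ^ (m+1) * (1 - x))
        < (((m:ℝ)+2)^(m+2) / (((m:ℝ)+3) * ((m:ℝ)+1)^(m+1))) * (((m:ℝ)+3) * x ^ (m+1) * (1 - x)) :=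
      mul_lt_mul_of_pos_right hA hpos
    have step2 : (((m:ℝ)+2)^(m+2) / (((m:ℝ)+3) * ((m:ℝ)+1)^(m+1))) * (((m:ℝ)+3) * x ^ (m+1) * (1 - x)) ≤ 1 := by
      have hApos : (0:ℝ) ≤ ((m:ℝ)+2)^(m+2) / (((m:ℝ)+3) * ((m:ℝ)+1)^(m+1)) := by positivity
      have h2 : (((m:ℝ)+2)^(m+2) / (((m:ℝ)+3) * ((m:ℝ)+1)^(m+1)))
          * (((m:ℝ)+3) * (((m:ℝ)+1)^(m+1) / ((m:ℝ)+2)^(m+2))) = 1 := by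
        field_simp
      calc (((m:ℝ)+2)^(m+2) / (((m:ℝ)+3) * ((m:ℝ)+1)^(m+1))) * (((m:ℝ)+3) * x ^ (m+1) * (1 - x))
          ≤ (((m:ℝ)+2)^(m+2) / (((m:ℝ)+3) * ((m:ℝ)+1)^(m+1))) * (((m:ℝ)+3) * (((m:ℝ)+1)^(m+1) / ((m:ℝ)+2)^(m+2))) := by
            apply mul_le_mul_of_nonneg_left _ hApos
            calc ((m:ℝ)+3) * x ^ (m+1) * (1 - x) = ((m:ℝ)+3) * (x ^ (m+1) * (1 - x)) := by ring
              _ ≤ ((m:ℝ)+3) * (((m:ℝ)+1)^(m+1) / ((m:ℝ)+2)^(m+2)) := by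
                  apply mul_le_mul_of_nonneg_left hb (by positivity)
        _ = 1 := h2
    have h3 : lam ^ 2 * (((m:ℝ)+3) * x ^ (m+1) * (1 - x)) < 1 := lt_of_lt_of_le step1 step2
    rw [lt_div_iff₀ h1x]
    have e : lam ^ 2 * (((m:ℝ)+3) * x ^ (m+2)) * (1 - x)
        = (lam ^ 2 * (((m:ℝ)+3) * x ^ (m+1) * (1 - x))) * x := by ring
    rw [e]
    calc (lam ^ 2 * (((m:ℝ)+3) * x ^ (m+1) * (1 - x))) * x < 1 * x :=
          mul_lt_mul_of_pos_right h3 hx0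
      _ = x := one_mul x
  have e4 : (-1) / (1 - x) + 1 = -(x / (1 - x)) := by
    field_simp
    ring
  push_cast
  linarith [key, e4]
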